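/- Let H be a Hilbert space, T a bounded linear operator on H, and m a positive integer. If T is an m-isometry, then for every positive integer r, the power T^r is also an m-isometry. -/
import Mathlib

open Finset Function

section aux
variable {G : Type*} [AddCommGroup G]

lemma fwdDiff_shift_sum (a r : ℕ) (g : ℕ → G) :
    fwdDiff a (fun y => ∑ i ∈ range r, g (y + i)) = fun y => ∑ i ∈ range r, fwdDiff a g (y + i) := by
  funext y
  simp only [fwdDiff, ← Finset.sum_sub_distrib]
  refine Finset.sum_congr rfl fun i _ => ?_
  rw [add_right_comm]

lemma fwdDiff_iter_shift_sum (a r n : ℕ) (g : ℕ → G) :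
    (fwdDiff a)^[n] (fun y => ∑ i ∈ range r, g (y + i))
      = fun y => ∑ i ∈ range r, (fwdDiff a)^[n] g (y + i) := by
  induction n generalizing g with
  | zero => simp
  | succ n IH =>
    rw [iterate_succ_apply, fwdDiff_shift_sum, IH]
    funext y
    refine Finset.sum_congr rfl fun i _ => ?_
    rw [← iterate_succ_apply]

lemma fwdDiff_nat_eq_sum (r : ℕ) (f : ℕ → G) :
    fwdDiff r f = fun y => ∑ i ∈ range r, fwdDiff 1 f (y + i) := by
  funext y
  have h := Finset.sum_range_sub (fun i => f (y + i)) r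
  simp only [fwdDiff]
  calc f (y + r) - f y = (fun i => f (y + i)) r - (fun i => f (y + i)) 0 := by simp
    _ = ∑ i ∈ range r, ((fun i => f (y + i)) (i + 1) - (fun i => f (y + i)) i) := h.symm
    _ = ∑ i ∈ range r, (f (y + i + 1) - f (y + i)) := by
        refine Finset.sum_congr rfl fun i _ => ?_
        simp [add_assoc]

lemma fwdDiff_iter_kill (m r : ℕ) (f : ℕ → G) (hf : (fwdDiff 1)^[m] f = 0) :
    (fwdDiff r)^[m] f = 0 := by
  induction m generalizing f with
  | zero => simpa using hf
  | succ n IH =>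
    rw [iterate_succ_apply] at hf ⊢
    rw [fwdDiff_nat_eq_sum, fwdDiff_iter_shift_sum]
    have h0 := IH (fwdDiff 1 f) hf
    funext y
    simp [h0]

end aux

theorem stmt_3 {H : Type*} [NormedAddCommGroup H] [InnerProductSpace ℂ H] [CompleteSpace H]
    (T : H →L[ℂ] H) (m : ℕ) (hm : 0 < m)
    (hT : ∀ x : H, ∑ k ∈ range (m + 1),
      ((-1 : ℝ)) ^ (m - k) * (m.choose k) * ‖(T ^ k) x‖ ^ 2 = 0)
    (r : ℕ) (hr : 0 < r) :
    ∀ x : H, ∑ k ∈ range (m + 1),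
      ((-1 : ℝ)) ^ (m - k) * (m.choose k) * ‖((T ^ r) ^ k) x‖ ^ 2 = 0 := by
  intro x
  set f : ℕ → ℝ := fun n => ‖(T ^ n) x‖ ^ 2 with hfdef
  have hf1 : (fwdDiff 1)^[m] f = 0 := by
    funext y
    simp only [Pi.zero_apply]
    rw [fwdDiff_iter_eq_sum_shift]
    rw [← hT ((T ^ y) x)]
    refine Finset.sum_congr rfl fun k hk => ?_
    have hTk : (T ^ k) ((T ^ y) x) = (T ^ (y + k)) x := by
      rw [add_comm, pow_add, ContinuousLinearMap.mul_apply]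
    rw [hTk]
    simp only [hfdef, smul_eq_mul, Pi.zero_apply, smul_mul_assoc, zsmul_eq_mul]
    push_cast
    ring
  have h2 := fwdDiff_iter_kill m r f hf1
  have h3 : ∑ k ∈ range (m + 1), ((-1 : ℤ) ^ (m - k) * (m.choose k : ℤ)) • f (0 + k • r) = 0 := by
    rw [← fwdDiff_iter_eq_sum_shift, h2, Pi.zero_apply]
  rw [← h3]
  refine Finset.sum_congr rfl fun k hk => ?_
  have : ((T ^ r) ^ k) x = (T ^ (0 + k • r)) x := by
    rw [← pow_mul, smul_eq_mul, zero_add, mul_comm]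
  rw [this]
  simp only [hfdef, zsmul_eq_mul]
  push_cast
  ring
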